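/- For i ≥ 1, j ≥ 0 and 0 ≤ r ≤ i-1, the number of Kimberling paths from (0,0) to (i,j) with exactly r internal vertices (equivalently, r+1 steps) equals C(i-1, r) · C(r+j, r). -/

import Mathlib

/-- A Kimberling path is a list of steps (a,b) with a ≥ 1 (and b ≥ 0, automatic in ℕ),
starting at the origin. `pathEnd` gives its endpoint. -/
def pathEnd (l : List (ℕ × ℕ)) : ℕ × ℕ := ((l.map Prod.fst).sum, (l.map Prod.snd).sum)

/-- Kimberling paths from (0,0) to (i,j). -/
def Kimb (i j : ℕ) : Set (List (ℕ × ℕ)) :=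
  {l | (∀ s ∈ l, 1 ≤ s.1) ∧ pathEnd l = (i, j)}

/-- Kimberling paths from (0,0) to (i,j) with r internal vertices, i.e. r+1 steps. -/
def KimbR (i j r : ℕ) : Set (List (ℕ × ℕ)) :=
  {l | l ∈ Kimb i j ∧ l.length = r + 1}

lemma sum_count_univ {m : ℕ} (s : Multiset (Fin m)) :
    ∑ k : Fin m, s.count k = Multiset.card s := by
  rw [← Multiset.toFinset_sum_count_eq]
  exact (Finset.sum_subset (Finset.subset_univ _) (by simp [Multiset.count_eq_zero])).symm

/-- Tuples summing to `n` are in bijection with multisets of size `n`. -/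
def adtEquivSym (m n : ℕ) :
    {x // x ∈ Finset.Nat.antidiagonalTuple m n} ≃ Sym (Fin m) n where
  toFun f := ⟨∑ k : Fin m, Multiset.replicate (f.1 k) k, by
    rw [Multiset.card_sum]
    simpa using (Finset.Nat.mem_antidiagonalTuple.mp f.2)⟩
  invFun s := ⟨fun k => s.1.count k, by
    rw [Finset.Nat.mem_antidiagonalTuple, sum_count_univ, s.2]⟩
  left_inv f := by
    ext k
    simp [Multiset.count_sum', Multiset.count_replicate]
  right_inv s := by
    apply Subtype.ext
    apply Multiset.ext.mpr
    intro a
    simp [Multiset.count_sum', Multiset.count_replicate]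

lemma card_adt (m n : ℕ) :
    (Finset.Nat.antidiagonalTuple m n).card = Nat.multichoose m n := by
  rw [← Fintype.card_coe]
  rw [Fintype.card_congr (adtEquivSym m n)]
  simpa using Sym.card_sym_eq_multichoose (Fin m) n

lemma adt_pos_sum {m : ℕ} (f : Fin m → ℕ) (hpos : ∀ k, 1 ≤ f k) :
    ∑ k : Fin m, (f k - 1) + m = ∑ k : Fin m, f k := by
  have h1 : ∑ k : Fin m, (f k - 1 + 1) = ∑ k : Fin m, f k :=
    Finset.sum_congr rfl fun k _ => Nat.sub_add_cancel (hpos k)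
  rw [Finset.sum_add_distrib] at h1
  simpa using h1

/-- The number of positive tuples of length m summing to n. -/
lemma card_adt_pos (m n : ℕ) (h : m ≤ n) :
    ((Finset.Nat.antidiagonalTuple m n).filter (fun f => ∀ k, 1 ≤ f k)).card
      = Nat.multichoose m (n - m) := by
  rw [← card_adt]
  refine Finset.card_bij' (fun f _ => fun k => f k - 1) (fun f _ => fun k => f k + 1)
    ?_ ?_ ?_ ?_
  · intro f hf
    simp only [Finset.mem_filter, Finset.Nat.mem_antidiagonalTuple] at hf ⊢
    obtain ⟨hsum, hpos⟩ := hf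
    have := adt_pos_sum f hpos
    omega
  · intro f hf
    simp only [Finset.Nat.mem_antidiagonalTuple] at hf
    simp only [Finset.mem_filter, Finset.Nat.mem_antidiagonalTuple]
    refine ⟨?_, fun k => by omega⟩
    rw [Finset.sum_add_distrib, hf]
    simp [Nat.sub_add_cancel h]
  · intro f hf
    simp only [Finset.mem_filter] at hf
    funext k
    exact Nat.sub_add_cancel (hf.2 k)
  · intro f _
    funext k
    simp

theorem kimberling_count (i j r : ℕ) (hi : 1 ≤ i) (hr : r ≤ i - 1) :
    (KimbR i j r).ncard = Nat.choose (i - 1) r * Nat.choose (r + j) r := by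
  classical
  set S : Finset ((Fin (r+1) → ℕ) × (Fin (r+1) → ℕ)) :=
    ((Finset.Nat.antidiagonalTuple (r+1) i).filter (fun f => ∀ k, 1 ≤ f k)) ×ˢ
      Finset.Nat.antidiagonalTuple (r+1) j with hS
  set F : ((Fin (r+1) → ℕ) × (Fin (r+1) → ℕ)) → List (ℕ × ℕ) :=
    fun fg => List.ofFn (fun k => (fg.1 k, fg.2 k)) with hF
  have hFinj : Function.Injective F := by
    rintro ⟨f, g⟩ ⟨f', g'⟩ h
    simp only [hF] at h
    have h2 := List.ofFn_inj.mp h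
    refine Prod.ext (funext fun k => ?_) (funext fun k => ?_)
    · exact congrArg Prod.fst (congrFun h2 k)
    · exact congrArg Prod.snd (congrFun h2 k)
  have hset : KimbR i j r = ↑(S.image F) := by
    ext l
    simp only [Finset.coe_image, Set.mem_image, Finset.mem_coe, hS, Finset.mem_product,
      Finset.mem_filter, Finset.Nat.mem_antidiagonalTuple]
    constructor
    · rintro ⟨⟨hpos, hend⟩, hlen⟩
      set v : Fin (r+1) → ℕ × ℕ := fun k => l.get (Fin.cast hlen.symm k) with hv
      have hl : l = List.ofFn v := by
        apply List.ext_get (by simp [hlen])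
        intro n h1 h2
        rw [List.get_ofFn]
        rfl
      have h1 : (l.map Prod.fst).sum = i := congrArg Prod.fst hend
      have h2 : (l.map Prod.snd).sum = j := congrArg Prod.snd hend
      refine ⟨(fun k => (v k).1, fun k => (v k).2), ⟨⟨?_, ?_⟩, ?_⟩, ?_⟩
      · rw [← h1, hl, List.map_ofFn, List.sum_ofFn]; rfl
      · intro k
        exact hpos (v k) (hl ▸ (List.mem_ofFn (f := v) (a := v k)).mpr ⟨k, rfl⟩)
      · rw [← h2, hl, List.map_ofFn, List.sum_ofFn]; rfl
      · rw [hF, hl]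
    · rintro ⟨⟨f, g⟩, ⟨⟨hfsum, hfpos⟩, hgsum⟩, rfl⟩
      refine ⟨⟨?_, ?_⟩, by simp [hF]⟩
      · intro s hs
        simp only [hF, List.mem_ofFn] at hs
        obtain ⟨k, rfl⟩ := hs
        exact hfpos k
      · simp only [pathEnd, hF, List.map_ofFn, List.sum_ofFn]
        exact Prod.ext (by simpa using hfsum) (by simpa using hgsum)
  rw [hset, Set.ncard_coe_finset, Finset.card_image_of_injective _ hFinj, hS,
    Finset.card_product, card_adt_pos _ _ (by omega), card_adt,
    Nat.multichoose_eq, Nat.multichoose_eq]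
  have e1 : (r + 1 + (i - (r + 1)) - 1).choose (i - (r + 1)) = (i - 1).choose r := by
    have h1 : r + 1 + (i - (r + 1)) - 1 = i - 1 := by omega
    have h2 : i - (r + 1) = (i - 1) - r := by omega
    rw [h1, h2, Nat.choose_symm hr]
  have e2 : (r + 1 + j - 1).choose j = (r + j).choose r := by
    have h1 : r + 1 + j - 1 = r + j := by omega
    rw [h1]
    exact Nat.choose_symm_add.symm
  rw [e1, e2]
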